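/- Let P be a positive logic and L := Int + P. A positive multiple-conclusion rule Γ/Δ (with Γ, Δ finite sets of positive formulas) is admissible for P if and only if it is admissible for L. (Admissible for P: every positive substitution unifying all of Γ in P unifies some formula of Δ in P; admissible for L: every substitution unifying all of Γ in L unifies some formula of Δ in L.) -/

import Mathlib

/-- Propositional formulas over ∧, ∨, →, ⊥ and variables. -/
inductive Fml : Type
  | var : ℕ → Fml
  | bot : Fml
  | and : Fml → Fml → Fml
  | or  : Fml → Fml → Fml
  | imp : Fml → Fml → Fml

namespace Fml

/-- A formula is positive if it contains no ⊥. -/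
def Positive : Fml → Prop
  | var _ => True
  | bot => False
  | and A B => A.Positive ∧ B.Positive
  | or A B => A.Positive ∧ B.Positive
  | imp A B => A.Positive ∧ B.Positive

/-- Evaluation in a Brouwerian (generalized Heyting) algebra, with a designated
value `z` interpreting ⊥. -/
def evalB {α : Type} [GeneralizedHeytingAlgebra α] (z : α) (ν : ℕ → α) : Fml → α
  | var n => ν n
  | bot => z
  | and A B => A.evalB z ν ⊓ B.evalB z ν
  | or A B => A.evalB z ν ⊔ B.evalB z ν
  | imp A B => A.evalB z ν ⇨ B.evalB z ν

/-- Evaluation in a Heyting algebra (⊥ interpreted as the least element). -/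
def eval {α : Type} [HeytingAlgebra α] (ν : ℕ → α) (A : Fml) : α := A.evalB ⊥ ν

/-- Evaluation of (positive) formulas in a Brouwerian algebra
(⊥ gets the junk value ⊤; it is irrelevant for positive formulas). -/
def pEval {α : Type} [GeneralizedHeytingAlgebra α] (ν : ℕ → α) (A : Fml) : α := A.evalB ⊤ ν

/-- Substitution. -/
def subst (σ : ℕ → Fml) : Fml → Fml
  | var n => σ n
  | bot => bot
  | and A B => and (A.subst σ) (B.subst σ)
  | or A B => or (A.subst σ) (B.subst σ)
  | imp A B => imp (A.subst σ) (B.subst σ)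

/-- Replacing every occurrence of ⊥ by the formula `C`. -/
def substBot : Fml → Fml → Fml
  | var n, _ => var n
  | bot, C => C
  | and A B, C => and (A.substBot C) (B.substBot C)
  | or A B, C => or (A.substBot C) (B.substBot C)
  | imp A B, C => imp (A.substBot C) (B.substBot C)

/-- The set of variables occurring in a formula. -/
def vars : Fml → Finset ℕ
  | var n => {n}
  | bot => ∅
  | and A B => A.vars ∪ B.vars
  | or A B => A.vars ∪ B.vars
  | imp A B => A.vars ∪ B.vars

end Fml

/-- The set of positive formulas. -/
def PosFml : Set Fml := {A | A.Positive}

/-- A substitution is positive if all its values are positive formulas. -/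
def PosSubst (σ : ℕ → Fml) : Prop := ∀ n, (σ n).Positive

/-- Validity of a formula in a Heyting algebra. -/
def ValidH (α : Type) [HeytingAlgebra α] (A : Fml) : Prop := ∀ ν : ℕ → α, A.eval ν = ⊤

/-- Intuitionistic propositional logic (via algebraic semantics). -/
def IntL : Set Fml := {A | ∀ (α : Type) [HeytingAlgebra α], ValidH α A}

/-- Superintuitionistic logics. -/
structure IsSILogic (L : Set Fml) : Prop where
  int_sub : IntL ⊆ L
  mp : ∀ A B : Fml, Fml.imp A B ∈ L → A ∈ L → B ∈ L
  subst_closed : ∀ A ∈ L, ∀ σ : ℕ → Fml, A.subst σ ∈ L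

/-- The least superintuitionistic logic containing `Γ`. -/
def IntPlus (Γ : Set Fml) : Set Fml := ⋂₀ {L | IsSILogic L ∧ Γ ⊆ L}

/-- The positive fragment of intuitionistic logic. -/
def IntLPos : Set Fml := IntL ∩ PosFml

/-- Positive logics. -/
structure IsPosLogic (P : Set Fml) : Prop where
  pos : P ⊆ PosFml
  int_sub : IntLPos ⊆ P
  mp : ∀ A B : Fml, Fml.imp A B ∈ P → A ∈ P → B ∈ P
  subst_closed : ∀ A ∈ P, ∀ σ : ℕ → Fml, PosSubst σ → A.subst σ ∈ P

/-- The least positive logic containing `Γ`. -/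
def IntPosPlus (Γ : Set Fml) : Set Fml := ⋂₀ {P | IsPosLogic P ∧ Γ ⊆ P}

/-- Homomorphism of Brouwerian algebras (preserves ⊓, ⊔, ⇨, ⊤). -/
def IsBrHom {α β : Type} [GeneralizedHeytingAlgebra α] [GeneralizedHeytingAlgebra β]
    (f : α → β) : Prop :=
  (∀ a b : α, f (a ⊓ b) = f a ⊓ f b) ∧ (∀ a b : α, f (a ⊔ b) = f a ⊔ f b) ∧
  (∀ a b : α, f (a ⇨ b) = f a ⇨ f b) ∧ f ⊤ = ⊤

/-- A Heyting algebra is a model of a set of formulas `T`. -/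
def Models (α : Type) [HeytingAlgebra α] (T : Set Fml) : Prop := ∀ A ∈ T, ValidH α A

/-- The variety (of Heyting algebras) axiomatized by `T` is B-saturated: any Heyting
algebra whose Brouwerian reduct embeds into the reduct of a model of `T` is itself
a model of `T`. -/
def BSaturated (T : Set Fml) : Prop :=
  ∀ (α : Type) (iα : HeytingAlgebra α),
    (∃ (β : Type) (iβ : HeytingAlgebra β), @Models β iβ T ∧
      ∃ f : α → β, Function.Injective f ∧
        @IsBrHom α β iα.toGeneralizedHeytingAlgebra iβ.toGeneralizedHeytingAlgebra f) →
    @Models α iα T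

/-- A subset of a Brouwerian algebra closed under the Brouwerian operations. -/
def BrClosed {α : Type} [GeneralizedHeytingAlgebra α] (S : Set α) : Prop :=
  ⊤ ∈ S ∧ ∀ a ∈ S, ∀ b ∈ S, a ⊓ b ∈ S ∧ a ⊔ b ∈ S ∧ (a ⇨ b) ∈ S

/-- The Brouwerian subalgebra generated by a set. -/
def genBr {α : Type} [GeneralizedHeytingAlgebra α] (s : Set α) : Set α :=
  ⋂₀ {S | BrClosed S ∧ s ⊆ S}

/-- Conjunction of a list of variables (nonempty case is the intended one). -/
def conjList : List ℕ → Fml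
  | [] => Fml.imp (Fml.var 0) (Fml.var 0)
  | [n] => Fml.var n
  | n :: l => Fml.and (Fml.var n) (conjList l)

/-- The conjunction π^∧ of all variables in a finite set π. -/
def conjOf (π : Finset ℕ) : Fml := conjList (π.sort (· ≤ ·))

/-- Multiple-conclusion rules. -/
def MRule : Type := Finset Fml × Finset Fml

/-- A rule is positive if all its premises and conclusions are positive. -/
def PosRule (r : MRule) : Prop := (∀ A ∈ r.1, A.Positive) ∧ (∀ B ∈ r.2, B.Positive)

/-- Validity of a (positive) m-rule in a Brouwerian algebra. -/
def RuleValid (α : Type) [GeneralizedHeytingAlgebra α] (r : MRule) : Prop :=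
  ∀ ν : ℕ → α, (∀ A ∈ r.1, A.pEval ν = ⊤) → ∃ B ∈ r.2, B.pEval ν = ⊤

/-- A Brouwerian algebra is a model of a set of positive formulas. -/
def ModelsP (β : Type) [GeneralizedHeytingAlgebra β] (P : Set Fml) : Prop :=
  ∀ A ∈ P, ∀ ν : ℕ → β, A.pEval ν = ⊤

/-- Filter of a Brouwerian (or Heyting) algebra. -/
def IsFilter' {α : Type} [GeneralizedHeytingAlgebra α] (F : Set α) : Prop :=
  ⊤ ∈ F ∧ ∀ a b : α, a ∈ F → (a ⇨ b) ∈ F → b ∈ F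

section AuxStmt13

namespace Fml

theorem subst_subst (σ θ : ℕ → Fml) : ∀ E : Fml,
    (E.subst σ).subst θ = E.subst (fun n => (σ n).subst θ)
  | var n => rfl
  | bot => rfl
  | and A B => by simp only [subst, subst_subst σ θ A, subst_subst σ θ B]
  | or A B => by simp only [subst, subst_subst σ θ A, subst_subst σ θ B]
  | imp A B => by simp only [subst, subst_subst σ θ A, subst_subst σ θ B]

theorem subst_eq_self (θ : ℕ → Fml) : ∀ E : Fml, (∀ q ∈ E.vars, θ q = var q) → E.subst θ = E
  | var n, h => h n (by simp [vars])
  | bot, _ => rfl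
  | and A B, h => by
      simp only [subst, subst_eq_self θ A (fun q hq => h q (Finset.mem_union_left _ hq)),
        subst_eq_self θ B (fun q hq => h q (Finset.mem_union_right _ hq))]
  | or A B, h => by
      simp only [subst, subst_eq_self θ A (fun q hq => h q (Finset.mem_union_left _ hq)),
        subst_eq_self θ B (fun q hq => h q (Finset.mem_union_right _ hq))]
  | imp A B, h => by
      simp only [subst, subst_eq_self θ A (fun q hq => h q (Finset.mem_union_left _ hq)),
        subst_eq_self θ B (fun q hq => h q (Finset.mem_union_right _ hq))]

theorem substBot_eq_self (C : Fml) : ∀ E : Fml, E.Positive → E.substBot C = E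
  | var _, _ => rfl
  | bot, h => absurd h (by simp [Positive])
  | and A B, h => by simp only [substBot, substBot_eq_self C A h.1, substBot_eq_self C B h.2]
  | or A B, h => by simp only [substBot, substBot_eq_self C A h.1, substBot_eq_self C B h.2]
  | imp A B, h => by simp only [substBot, substBot_eq_self C A h.1, substBot_eq_self C B h.2]

theorem positive_substBot (C : Fml) (hC : C.Positive) : ∀ E : Fml, (E.substBot C).Positive
  | var _ => trivial
  | bot => hC
  | and A B => ⟨positive_substBot C hC A, positive_substBot C hC B⟩
  | or A B => ⟨positive_substBot C hC A, positive_substBot C hC B⟩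
  | imp A B => ⟨positive_substBot C hC A, positive_substBot C hC B⟩

theorem positive_subst (σ : ℕ → Fml) (hσ : PosSubst σ) : ∀ E : Fml, E.Positive → (E.subst σ).Positive
  | var n, _ => hσ n
  | bot, h => absurd h (by simp [Positive])
  | and A B, h => ⟨positive_subst σ hσ A h.1, positive_subst σ hσ B h.2⟩
  | or A B, h => ⟨positive_subst σ hσ A h.1, positive_subst σ hσ B h.2⟩
  | imp A B, h => ⟨positive_subst σ hσ A h.1, positive_subst σ hσ B h.2⟩

theorem subst_substBot (σ : ℕ → Fml) (C : Fml) : ∀ E : Fml, E.Positive →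
    (E.subst σ).substBot C = E.subst (fun n => (σ n).substBot C)
  | var n, _ => rfl
  | bot, h => absurd h (by simp [Positive])
  | and A B, h => by simp only [subst, substBot, subst_substBot σ C A h.1, subst_substBot σ C B h.2]
  | or A B, h => by simp only [subst, substBot, subst_substBot σ C A h.1, subst_substBot σ C B h.2]
  | imp A B, h => by simp only [subst, substBot, subst_substBot σ C A h.1, subst_substBot σ C B h.2]

theorem substBot_subst (C : Fml) (θ : ℕ → Fml) : ∀ E : Fml, (∀ q ∈ E.vars, θ q = var q) →
    (E.substBot C).subst θ = E.substBot (C.subst θ)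
  | var n, h => h n (by simp [vars])
  | bot, _ => rfl
  | and A B, h => by
      simp only [substBot, subst, substBot_subst C θ A (fun q hq => h q (Finset.mem_union_left _ hq)),
        substBot_subst C θ B (fun q hq => h q (Finset.mem_union_right _ hq))]
  | or A B, h => by
      simp only [substBot, subst, substBot_subst C θ A (fun q hq => h q (Finset.mem_union_left _ hq)),
        substBot_subst C θ B (fun q hq => h q (Finset.mem_union_right _ hq))]
  | imp A B, h => by
      simp only [substBot, subst, substBot_subst C θ A (fun q hq => h q (Finset.mem_union_left _ hq)),
        substBot_subst C θ B (fun q hq => h q (Finset.mem_union_right _ hq))]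

theorem vars_subst (ρ : ℕ → Fml) (W : Finset ℕ) (h : ∀ q, (ρ q).vars ⊆ W) :
    ∀ E : Fml, (E.subst ρ).vars ⊆ W
  | var n => h n
  | bot => by simp [subst, vars]
  | and A B => by
      simp only [subst, vars]
      exact Finset.union_subset (vars_subst ρ W h A) (vars_subst ρ W h B)
  | or A B => by
      simp only [subst, vars]
      exact Finset.union_subset (vars_subst ρ W h A) (vars_subst ρ W h B)
  | imp A B => by
      simp only [subst, vars]
      exact Finset.union_subset (vars_subst ρ W h A) (vars_subst ρ W h B)

section Eval
variable {α : Type} [GeneralizedHeytingAlgebra α]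

theorem evalB_subst (z : α) (ν : ℕ → α) (θ : ℕ → Fml) : ∀ E : Fml,
    (E.subst θ).evalB z ν = E.evalB z (fun q => (θ q).evalB z ν)
  | var n => rfl
  | bot => rfl
  | and A B => by simp only [subst, evalB, evalB_subst z ν θ A, evalB_subst z ν θ B]
  | or A B => by simp only [subst, evalB, evalB_subst z ν θ A, evalB_subst z ν θ B]
  | imp A B => by simp only [subst, evalB, evalB_subst z ν θ A, evalB_subst z ν θ B]

theorem evalB_substBot (z : α) (ν : ℕ → α) (C : Fml) : ∀ E : Fml,
    (E.substBot C).evalB z ν = E.evalB (C.evalB z ν) ν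
  | var n => rfl
  | bot => rfl
  | and A B => by simp only [substBot, evalB, evalB_substBot z ν C A, evalB_substBot z ν C B]
  | or A B => by simp only [substBot, evalB, evalB_substBot z ν C A, evalB_substBot z ν C B]
  | imp A B => by simp only [substBot, evalB, evalB_substBot z ν C A, evalB_substBot z ν C B]

theorem evalB_congr (z : α) : ∀ (E : Fml) {ν ν' : ℕ → α},
    (∀ q ∈ E.vars, ν q = ν' q) → E.evalB z ν = E.evalB z ν'
  | var n, ν, ν', h => h n (by simp [vars])
  | bot, _, _, _ => rfl
  | and A B, ν, ν', h => by
      simp only [evalB, evalB_congr z A (fun q hq => h q (Finset.mem_union_left _ hq)),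
        evalB_congr z B (fun q hq => h q (Finset.mem_union_right _ hq))]
  | or A B, ν, ν', h => by
      simp only [evalB, evalB_congr z A (fun q hq => h q (Finset.mem_union_left _ hq)),
        evalB_congr z B (fun q hq => h q (Finset.mem_union_right _ hq))]
  | imp A B, ν, ν', h => by
      simp only [evalB, evalB_congr z A (fun q hq => h q (Finset.mem_union_left _ hq)),
        evalB_congr z B (fun q hq => h q (Finset.mem_union_right _ hq))]

end Eval

end Fml

end AuxStmt13

section AuxStmt13b

theorem conjList_positive : ∀ l : List ℕ, (conjList l).Positive
  | [] => ⟨trivial, trivial⟩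
  | [_] => trivial
  | _ :: m :: t => ⟨trivial, conjList_positive (m :: t)⟩

theorem mem_of_mem_vars_conjList : ∀ l : List ℕ, l ≠ [] → ∀ q ∈ (conjList l).vars, q ∈ l
  | [], h, _, _ => absurd rfl h
  | [n], _, q, hq => by
      simp only [conjList, Fml.vars, Finset.mem_singleton] at hq
      simp [hq]
  | n :: m :: t, _, q, hq => by
      simp only [conjList, Fml.vars, Finset.mem_union, Finset.mem_singleton] at hq
      rcases hq with rfl | hq
      · exact List.mem_cons_self
      · exact List.mem_cons_of_mem _ (mem_of_mem_vars_conjList (m :: t) (by simp) q hq)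

theorem evalB_conjList_le {α : Type} [GeneralizedHeytingAlgebra α] (z : α) (ν : ℕ → α) :
    ∀ (l : List ℕ) (q : ℕ), q ∈ l → (conjList l).evalB z ν ≤ ν q
  | [], q, hq => absurd hq List.not_mem_nil
  | [n], q, hq => by
      rcases List.mem_singleton.mp hq with rfl
      exact le_rfl
  | n :: m :: t, q, hq => by
      rcases List.mem_cons.mp hq with rfl | hq
      · exact inf_le_left
      · exact le_trans inf_le_right (evalB_conjList_le z ν (m :: t) q hq)

/-- Iterated implication. -/
def impL (l : List Fml) (C : Fml) : Fml := l.foldr Fml.imp C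

theorem impL_nil (C : Fml) : impL [] C = C := rfl
theorem impL_cons (B : Fml) (l : List Fml) (C : Fml) :
    impL (B :: l) C = Fml.imp B (impL l C) := rfl

theorem impL_subst (θ : ℕ → Fml) (C : Fml) : ∀ l : List Fml,
    (impL l C).subst θ = impL (l.map (Fml.subst θ)) (C.subst θ)
  | [] => rfl
  | B :: t => congrArg (Fml.imp (B.subst θ)) (impL_subst θ C t)

theorem impL_substBot (c : Fml) (C : Fml) : ∀ l : List Fml,
    (impL l C).substBot c = impL (l.map (fun B => B.substBot c)) (C.substBot c)
  | [] => rfl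
  | B :: t => congrArg (Fml.imp (B.substBot c)) (impL_substBot c C t)

section EvalImp
variable {α : Type} [GeneralizedHeytingAlgebra α]

theorem le_evalB_impL (z : α) (ν : ℕ → α) : ∀ (l : List Fml) (a : α) (C : Fml),
    a ≤ (impL l C).evalB z ν ↔
      a ⊓ (l.map (Fml.evalB z ν)).foldr (· ⊓ ·) ⊤ ≤ C.evalB z ν
  | [], a, C => by simp [impL_nil]
  | B :: t, a, C => by
      rw [impL_cons, List.map_cons, List.foldr_cons]
      show a ≤ B.evalB z ν ⇨ (impL t C).evalB z ν ↔ _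
      rw [le_himp_iff, le_evalB_impL z ν t (a ⊓ B.evalB z ν) C, inf_assoc]

theorem evalB_impL_eq_top (z : α) (ν : ℕ → α) (l : List Fml) (C : Fml) :
    (impL l C).evalB z ν = ⊤ ↔
      (l.map (Fml.evalB z ν)).foldr (· ⊓ ·) ⊤ ≤ C.evalB z ν := by
  rw [eq_top_iff, le_evalB_impL z ν l ⊤ C, top_inf_eq]

theorem foldr_inf_append : ∀ (l₁ l₂ : List α),
    (l₁ ++ l₂).foldr (· ⊓ ·) ⊤ = l₁.foldr (· ⊓ ·) ⊤ ⊓ l₂.foldr (· ⊓ ·) ⊤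
  | [], l₂ => by simp
  | a :: t, l₂ => by
      simp only [List.cons_append, List.foldr_cons, foldr_inf_append t l₂, inf_assoc]

end EvalImp

end AuxStmt13b

section AuxStmt13c

variable {α : Type} [HeytingAlgebra α]

instance iciHeyting (z : α) : HeytingAlgebra ↥(Set.Ici z) :=
  { (inferInstance : Lattice ↥(Set.Ici z)),
    (inferInstance : BoundedOrder ↥(Set.Ici z)) with
    himp := fun a b => ⟨(a : α) ⇨ (b : α), le_trans b.2 le_himp⟩
    le_himp_iff := fun _ _ _ => le_himp_iff (α := α)
    compl := fun a => ⟨(a : α) ⇨ z, le_himp⟩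
    himp_bot := fun _ => rfl }

theorem evalB_Ici (z : α) (ν : ℕ → α) (h : ∀ q, z ≤ ν q) : ∀ E : Fml,
    ((E.evalB (⊥ : ↥(Set.Ici z)) (fun q => ⟨ν q, h q⟩) : ↥(Set.Ici z)) : α) = E.evalB z ν
  | .var n => rfl
  | .bot => rfl
  | .and A B => by
      show ((A.evalB _ _ : ↥(Set.Ici z)) : α) ⊓ ((B.evalB _ _ : ↥(Set.Ici z)) : α) = _
      rw [evalB_Ici z ν h A, evalB_Ici z ν h B]; rfl
  | .or A B => by
      show ((A.evalB _ _ : ↥(Set.Ici z)) : α) ⊔ ((B.evalB _ _ : ↥(Set.Ici z)) : α) = _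
      rw [evalB_Ici z ν h A, evalB_Ici z ν h B]; rfl
  | .imp A B => by
      show ((A.evalB _ _ : ↥(Set.Ici z)) : α) ⇨ ((B.evalB _ _ : ↥(Set.Ici z)) : α) = _
      rw [evalB_Ici z ν h A, evalB_Ici z ν h B]; rfl

/-- Key semantic lemma: an intuitionistically valid formula evaluates to ⊤ with ⊥
interpreted as any `z` below the values of all its variables. -/
theorem evalB_eq_top_of_IntL {D : Fml} (hD : D ∈ IntL)
    (z : α) (ν : ℕ → α) (h : ∀ q ∈ D.vars, z ≤ ν q) : D.evalB z ν = ⊤ := by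
  have h1 : ∀ q, z ≤ ν q ⊔ z := fun q => le_sup_right
  have h2 := hD ↥(Set.Ici z) (fun q => ⟨ν q ⊔ z, h1 q⟩)
  have h3 : D.evalB z (fun q => ν q ⊔ z) = ⊤ := by
    have h4 := congrArg Subtype.val h2
    rwa [show (Fml.eval (fun q => (⟨ν q ⊔ z, h1 q⟩ : ↥(Set.Ici z))) D) =
      D.evalB (⊥ : ↥(Set.Ici z)) (fun q => ⟨ν q ⊔ z, h1 q⟩) from rfl,
      evalB_Ici z (fun q => ν q ⊔ z) h1 D] at h4
  rw [Fml.evalB_congr z D (ν' := fun q => ν q ⊔ z)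
    (fun q hq => (sup_eq_left.mpr (h q hq)).symm)]
  exact h3

end AuxStmt13c

section AuxStmt13d

theorem IntL_subst {A : Fml} (hA : A ∈ IntL) (θ : ℕ → Fml) : A.subst θ ∈ IntL := by
  intro α _ ν
  show (A.subst θ).evalB ⊥ ν = ⊤
  rw [Fml.evalB_subst]
  exact hA α (fun q => (θ q).evalB ⊥ ν)

theorem mem_IntPlus {Γ : Set Fml} {A : Fml} :
    A ∈ IntPlus Γ ↔ ∀ L : Set Fml, IsSILogic L → Γ ⊆ L → A ∈ L := by
  constructor
  · intro h L hL hΓL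
    exact h L ⟨hL, hΓL⟩
  · intro h L hL
    exact h L hL.1 hL.2

theorem subset_IntPlus (Γ : Set Fml) : Γ ⊆ IntPlus Γ :=
  fun A hA => mem_IntPlus.mpr (fun _ _ h => h hA)

theorem isSILogic_IntPlus (Γ : Set Fml) : IsSILogic (IntPlus Γ) where
  int_sub := fun A hA => mem_IntPlus.mpr (fun _ hL _ => hL.int_sub hA)
  mp := fun A B hAB hA => mem_IntPlus.mpr (fun L hL hΓL =>
    hL.mp A B (mem_IntPlus.mp hAB L hL hΓL) (mem_IntPlus.mp hA L hL hΓL))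
  subst_closed := fun A hA σ => mem_IntPlus.mpr (fun L hL hΓL =>
    hL.subst_closed A (mem_IntPlus.mp hA L hL hΓL) σ)

/-- Derivability from substitution instances of `P` over `Int`. -/
def Deriv (P : Set Fml) (A : Fml) : Prop :=
  ∃ l : List Fml, (∀ B ∈ l, ∃ p ∈ P, ∃ τ : ℕ → Fml, B = p.subst τ) ∧ impL l A ∈ IntL

theorem subst_var : ∀ E : Fml, E.subst Fml.var = E :=
  fun E => Fml.subst_eq_self Fml.var E (fun _ _ => rfl)

theorem impL_elim {L : Set Fml} (hmp : ∀ A B : Fml, Fml.imp A B ∈ L → A ∈ L → B ∈ L) :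
    ∀ (l : List Fml) (X : Fml), impL l X ∈ L → (∀ B ∈ l, B ∈ L) → X ∈ L
  | [], _, h, _ => h
  | B :: t, X, h, hm =>
      impL_elim hmp t X (hmp B (impL t X) h (hm B (List.mem_cons_self)))
        (fun C hC => hm C (List.mem_cons_of_mem _ hC))

theorem isSILogic_deriv (P : Set Fml) : IsSILogic {A | Deriv P A} where
  int_sub := fun A hA => ⟨[], by simp, hA⟩
  mp := by
    rintro A B ⟨l₁, hm₁, hv₁⟩ ⟨l₂, hm₂, hv₂⟩
    refine ⟨l₁ ++ l₂, ?_, ?_⟩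
    · intro C hC
      rcases List.mem_append.mp hC with h | h
      · exact hm₁ C h
      · exact hm₂ C h
    · intro α _ ν
      show (impL (l₁ ++ l₂) B).evalB ⊥ ν = ⊤
      rw [evalB_impL_eq_top, List.map_append, foldr_inf_append]
      have h₁ := (evalB_impL_eq_top (⊥ : α) ν l₁ (Fml.imp A B)).mp (hv₁ α ν)
      have h₂ := (evalB_impL_eq_top (⊥ : α) ν l₂ A).mp (hv₂ α ν)
      calc _ ≤ (Fml.imp A B).evalB ⊥ ν ⊓ A.evalB ⊥ ν := inf_le_inf h₁ h₂
        _ = (A.evalB ⊥ ν ⇨ B.evalB ⊥ ν) ⊓ A.evalB ⊥ ν := rfl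
        _ ≤ B.evalB ⊥ ν := himp_inf_le
  subst_closed := by
    rintro A ⟨l, hm, hv⟩ θ
    refine ⟨l.map (Fml.subst θ), ?_, ?_⟩
    · intro C hC
      rcases List.mem_map.mp hC with ⟨B, hB, rfl⟩
      obtain ⟨p, hp, τ, rfl⟩ := hm B hB
      exact ⟨p, hp, fun n => (τ n).subst θ, Fml.subst_subst τ θ p⟩
    · rw [← impL_subst]
      exact IntL_subst hv θ

theorem deriv_subset (P : Set Fml) : P ⊆ {X | Deriv P X} := by
  intro A hA
  show Deriv P A
  refine ⟨[A], fun B hB => ?_, ?_⟩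
  · rw [List.mem_singleton.mp hB]
    exact ⟨A, hA, Fml.var, (subst_var A).symm⟩
  · intro α _ ν
    show (Fml.imp A A).evalB ⊥ ν = ⊤
    exact himp_self

theorem IntPlus_deriv {P : Set Fml} {A : Fml} (hA : A ∈ IntPlus P) : Deriv P A :=
  mem_IntPlus.mp hA {X | Deriv P X} (isSILogic_deriv P) (deriv_subset P)

end AuxStmt13d

section AuxStmt13e

theorem sort_ne_nil {V : Finset ℕ} (hne : V.Nonempty) : V.sort (· ≤ ·) ≠ [] := by
  obtain ⟨q, hq⟩ := hne
  exact List.ne_nil_of_mem ((Finset.mem_sort _).mpr hq)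

theorem vars_conjOf {V : Finset ℕ} (hne : V.Nonempty) : (conjOf V).vars ⊆ V := by
  intro q hq
  exact (Finset.mem_sort _).mp
    (mem_of_mem_vars_conjList (V.sort (· ≤ ·)) (sort_ne_nil hne) q hq)

theorem evalB_conjOf_le {α : Type} [GeneralizedHeytingAlgebra α] (z : α) (ν : ℕ → α)
    {V : Finset ℕ} {q : ℕ} (hq : q ∈ V) : (conjOf V).evalB z ν ≤ ν q :=
  evalB_conjList_le z ν _ q ((Finset.mem_sort _).mpr hq)

/-- Conservativity via ⊥-replacement: if `E` is a theorem of `Int + P` and all its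
variables lie in the nonempty finite set `V`, then replacing `⊥` by the conjunction
of the variables in `V` yields a theorem of `P`. -/
theorem substBot_conjOf_mem {P : Set Fml} (hP : IsPosLogic P) {E : Fml}
    (hE : E ∈ IntPlus P) {V : Finset ℕ} (hne : V.Nonempty) (hv : E.vars ⊆ V) :
    E.substBot (conjOf V) ∈ P := by
  obtain ⟨l, hmem, hval⟩ := IntPlus_deriv hE
  set c : Fml := conjOf V with hc
  have hcpos : c.Positive := conjList_positive _
  set ρ : ℕ → Fml := fun q => if q ∈ V then Fml.var q else c with hρ
  have hρv : ∀ q, (ρ q).vars ⊆ V := by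
    intro q
    by_cases h : q ∈ V
    · simp only [hρ, if_pos h]
      intro r hr
      simp only [Fml.vars, Finset.mem_singleton] at hr
      rwa [hr]
    · simp only [hρ, if_neg h]
      exact vars_conjOf hne
  have hFval : (impL l E).subst ρ ∈ IntL := IntL_subst hval ρ
  have hEρ : E.subst ρ = E := Fml.subst_eq_self ρ E (fun q hq => by simp [hρ, hv hq])
  have hFvars : ((impL l E).subst ρ).vars ⊆ V := Fml.vars_subst ρ V hρv _
  have hGval : ((impL l E).subst ρ).substBot c ∈ IntL := by
    intro α _ ν
    show (((impL l E).subst ρ).substBot c).evalB ⊥ ν = ⊤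
    rw [Fml.evalB_substBot]
    exact evalB_eq_top_of_IntL hFval _ ν
      (fun q hq => evalB_conjOf_le ⊥ ν (hFvars hq))
  have hGpos : (((impL l E).subst ρ).substBot c).Positive :=
    Fml.positive_substBot c hcpos _
  have hGP : ((impL l E).subst ρ).substBot c ∈ P := hP.int_sub ⟨hGval, hGpos⟩
  rw [impL_subst, impL_substBot, hEρ] at hGP
  refine impL_elim hP.mp _ _ hGP ?_
  intro B hB
  rcases List.mem_map.mp hB with ⟨B₁, hB₁, rfl⟩
  rcases List.mem_map.mp hB₁ with ⟨B₀, hB₀, rfl⟩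
  obtain ⟨p, hp, τ, rfl⟩ := hmem B₀ hB₀
  rw [Fml.subst_subst, Fml.subst_substBot _ _ p (hP.pos hp)]
  exact hP.subst_closed p hp _ (fun n => Fml.positive_substBot c hcpos _)

end AuxStmt13e

/-- a positive m-rule Γ/Δ is admissible for a positive logic P iff it
is admissible for L = Int + P. -/
theorem stmt13 (P : Set Fml) (hP : IsPosLogic P) (Γ Δ : Finset Fml)
    (hΓ : ∀ A ∈ Γ, A.Positive) (hΔ : ∀ B ∈ Δ, B.Positive) :
    (∀ σ : ℕ → Fml, PosSubst σ → (∀ A ∈ Γ, A.subst σ ∈ P) →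
        ∃ B ∈ Δ, B.subst σ ∈ P) ↔
    (∀ σ : ℕ → Fml, (∀ A ∈ Γ, A.subst σ ∈ IntPlus P) →
        ∃ B ∈ Δ, B.subst σ ∈ IntPlus P) := by
  have hPL : P ⊆ IntPlus P := subset_IntPlus P
  have hSIL : IsSILogic (IntPlus P) := isSILogic_IntPlus P
  constructor
  · -- P-admissible → L-admissible
    intro hadm σ hσΓ
    set V₀ : Finset ℕ :=
      Γ.biUnion (fun A => (A.subst σ).vars) ∪ Δ.biUnion (fun A => (A.subst σ).vars) with hV₀
    set x : ℕ := V₀.sup id + 1 with hxdef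
    have hx : ∀ q ∈ V₀, q ≠ x := by
      intro q hq
      have : q ≤ V₀.sup id := Finset.le_sup (f := id) hq
      omega
    set V : Finset ℕ := insert x V₀ with hV
    have hVne : V.Nonempty := ⟨x, Finset.mem_insert_self _ _⟩
    set c : Fml := conjOf V with hc
    have hcpos : c.Positive := conjList_positive _
    set τ : ℕ → Fml := fun q => (σ q).substBot c with hτ
    have hτpos : PosSubst τ := fun q => Fml.positive_substBot c hcpos _
    have hΓτ : ∀ A ∈ Γ, A.subst τ ∈ P := by
      intro A hA
      have h1 : A.subst τ = (A.subst σ).substBot c := (Fml.subst_substBot σ c A (hΓ A hA)).symm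
      rw [h1]
      refine substBot_conjOf_mem hP (hσΓ A hA) hVne ?_
      intro q hq
      exact Finset.mem_insert_of_mem
        (Finset.mem_union_left _ (Finset.mem_biUnion.mpr ⟨A, hA, hq⟩))
    obtain ⟨B, hB, hBτ⟩ := hadm τ hτpos hΓτ
    refine ⟨B, hB, ?_⟩
    set θ : ℕ → Fml := fun q => if q = x then Fml.bot else Fml.var q with hθ
    have h2 : (B.subst τ).subst θ ∈ IntPlus P := hSIL.subst_closed _ (hPL hBτ) θ
    have hBστ : B.subst τ = (B.subst σ).substBot c := (Fml.subst_substBot σ c B (hΔ B hB)).symm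
    have hvarsB : ∀ q ∈ (B.subst σ).vars, θ q = Fml.var q := by
      intro q hq
      have hq0 : q ∈ V₀ := Finset.mem_union_right _ (Finset.mem_biUnion.mpr ⟨B, hB, hq⟩)
      simp [hθ, hx q hq0]
    have h3 : (B.subst τ).subst θ = (B.subst σ).substBot (c.subst θ) := by
      rw [hBστ]
      exact Fml.substBot_subst c θ _ hvarsB
    rw [h3] at h2
    have h4 : Fml.imp ((B.subst σ).substBot (c.subst θ)) (B.subst σ) ∈ IntL := by
      intro α _ ν
      have h5 : (c.subst θ).evalB (⊥ : α) ν = ⊥ := by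
        apply le_bot_iff.mp
        rw [Fml.evalB_subst]
        have h6 : (c.evalB (⊥ : α) (fun q => (θ q).evalB ⊥ ν)) ≤ (θ x).evalB (⊥:α) ν :=
          evalB_conjOf_le _ _ (Finset.mem_insert_self _ _)
        simpa [hθ, Fml.evalB] using h6
      show (((B.subst σ).substBot (c.subst θ)).evalB ⊥ ν) ⇨ ((B.subst σ).evalB ⊥ ν) = ⊤
      rw [Fml.evalB_substBot, h5]
      exact himp_self
    exact hSIL.mp _ _ (hSIL.int_sub h4) h2
  · -- L-admissible → P-admissible
    intro hadm σ hσpos hσΓ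
    obtain ⟨B, hB, hBL⟩ := hadm σ (fun A hA => hPL (hσΓ A hA))
    refine ⟨B, hB, ?_⟩
    have hpos : (B.subst σ).Positive := Fml.positive_subst σ hσpos B (hΔ B hB)
    have h := substBot_conjOf_mem hP hBL (V := insert 0 (B.subst σ).vars)
      ⟨0, Finset.mem_insert_self _ _⟩ (Finset.subset_insert _ _)
    rwa [Fml.substBot_eq_self _ _ hpos] at h
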